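/- Suppose Ω is compact and the market (f, S) is arbitrage-free, and let H : Ω → ℝ be a continuous nonnegative claim. Then there exists a superhedge π* ∈ ℝ^{D+1} for H that minimizes the cost π·f over all superhedges π for H; moreover, π*·f = ∫ H dP* for some martingale measure P*. -/

import Mathlib

open MeasureTheory Filter Topology

variable {Ω : Type*}

section Defs

variable [TopologicalSpace Ω] [MeasurableSpace Ω]

/-- A portfolio `π` is an arbitrage for the market `(f, S)`:
nonpositive cost, nonnegative payoff everywhere, strictly positive payoff somewhere. -/
def IsArbitrage {D : ℕ} (f : Fin (D + 1) → ℝ) (S : Fin (D + 1) → C(Ω, ℝ))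
    (π : Fin (D + 1) → ℝ) : Prop :=
  (∑ d, π d * f d) ≤ 0 ∧ (∀ ω : Ω, 0 ≤ ∑ d, π d * S d ω) ∧ (∃ ω : Ω, 0 < ∑ d, π d * S d ω)

/-- The market `(f, S)` is arbitrage-free. -/
def ArbitrageFree {D : ℕ} (f : Fin (D + 1) → ℝ) (S : Fin (D + 1) → C(Ω, ℝ)) : Prop :=
  ¬ ∃ π : Fin (D + 1) → ℝ, IsArbitrage f S π

/-- A measure has full support: every nonempty open set has positive measure. -/
def HasFullSupport (P : Measure Ω) : Prop :=
  ∀ U : Set Ω, IsOpen U → U.Nonempty → 0 < P U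

/-- A martingale measure for the market `(f, S)`: a Borel probability measure under which
every asset payoff is integrable with expectation equal to its time-0 price. -/
def IsMartingaleMeasure {D : ℕ} (f : Fin (D + 1) → ℝ) (S : Fin (D + 1) → C(Ω, ℝ))
    (P : Measure Ω) : Prop :=
  IsProbabilityMeasure P ∧ ∀ d, Integrable (S d) P ∧ (∫ ω, S d ω ∂P) = f d

/-- A portfolio `π` is a superhedge for the claim `H`. -/
def IsSuperhedge {D : ℕ} (S : Fin (D + 1) → C(Ω, ℝ)) (H : C(Ω, ℝ))
    (π : Fin (D + 1) → ℝ) : Prop :=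
  ∀ ω : Ω, H ω ≤ ∑ d, π d * S d ω

/-- A portfolio `π` is a subhedge for the claim `H`. -/
def IsSubhedge {D : ℕ} (S : Fin (D + 1) → C(Ω, ℝ)) (H : C(Ω, ℝ))
    (π : Fin (D + 1) → ℝ) : Prop :=
  ∀ ω : Ω, (∑ d, π d * S d ω) ≤ H ω

end Defs


section Aux
open Module Set Filter Topology MeasureTheory


/-- Convex hull of a compact set in a finite-dimensional normed space is compact. -/
theorem myIsCompact_convexHull {E : Type*} [NormedAddCommGroup E] [NormedSpace ℝ E]
    [FiniteDimensional ℝ E] {s : Set E} (hs : IsCompact s) (hne : s.Nonempty) :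
    IsCompact (convexHull ℝ s) := by
  classical
  set n := finrank ℝ E + 1 with hn
  have key : convexHull ℝ s =
      (fun p : (Fin n → ℝ) × (Fin n → E) => ∑ i, p.1 i • p.2 i) ''
        (stdSimplex ℝ (Fin n) ×ˢ Set.univ.pi fun _ => s) := by
    apply Set.Subset.antisymm
    · intro x hx
      obtain ⟨ι, hι, z, w, hzs, hai, hw0, hw1, hxx⟩ := eq_pos_convex_span_of_mem_convexHull hx
      obtain ⟨z₀, hz₀⟩ := hne
      have hcard : Fintype.card ι ≤ n := by
        refine (hai.card_le_finrank_succ).trans ?_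
        exact add_le_add_left (Submodule.finrank_le (R := ℝ) (M := E) _) 1
      obtain ⟨e⟩ : Nonempty (ι ↪ Fin n) := Function.Embedding.nonempty_of_card_le
        (by simpa using hcard)
      set w' : Fin n → ℝ := fun j => if h : ∃ i, e i = j then w h.choose else 0 with hw'
      set z' : Fin n → E := fun j => if h : ∃ i, e i = j then z h.choose else z₀ with hz'
      have hwe : ∀ i, w' (e i) = w i := by
        intro i
        have h : ∃ i', e i' = e i := ⟨i, rfl⟩
        simp only [hw', dif_pos h]
        rw [e.injective h.choose_spec]
      have hze : ∀ i, z' (e i) = z i := by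
        intro i
        have h : ∃ i', e i' = e i := ⟨i, rfl⟩
        simp only [hz', dif_pos h]
        rw [e.injective h.choose_spec]
      have himg : ∀ j ∉ Finset.univ.image e, w' j = 0 := by
        intro j hj
        have h : ¬ ∃ i, e i = j := by
          rintro ⟨i, rfl⟩
          exact hj (Finset.mem_image_of_mem e (Finset.mem_univ i))
        simp only [hw', dif_neg h]
      refine ⟨⟨w', z'⟩, ⟨?_, ?_⟩, ?_⟩
      · constructor
        · intro j
          by_cases h : ∃ i, e i = j
          · simp only [hw', dif_pos h]; exact (hw0 _).le
          · simp [hw', dif_neg h]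
        · rw [← Finset.sum_subset (Finset.subset_univ (Finset.univ.image e))
            (fun j _ hj => himg j hj)]
          rw [Finset.sum_image (fun a _ b _ h => e.injective h)]
          simpa [hwe] using hw1
      · intro j _
        by_cases h : ∃ i, e i = j
        · simp only [hz', dif_pos h]
          exact hzs ⟨_, rfl⟩
        · simpa [hz', dif_neg h] using hz₀
      · simp only
        rw [← Finset.sum_subset (Finset.subset_univ (Finset.univ.image e))
            (fun j _ hj => by rw [himg j hj, zero_smul])]
        rw [Finset.sum_image (fun a _ b _ h => e.injective h)]
        simp only [hwe, hze]
        exact hxx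
    · rintro x ⟨⟨w, z⟩, ⟨hw, hz⟩, rfl⟩
      exact mem_convexHull_of_exists_fintype w z hw.1 hw.2
        (fun i => hz i (Set.mem_univ i)) rfl
  rw [key]
  refine (IsCompact.prod (isCompact_stdSimplex ℝ _) (isCompact_univ_pi fun _ => hs)).image ?_
  exact continuous_finset_sum _ fun i _ =>
    ((continuous_apply i).comp continuous_fst).smul ((continuous_apply i).comp continuous_snd)

/-- A finite convex combination of Dirac measures, with its integral formula. -/
theorem exists_discrete_measure {Ω : Type*} [MeasurableSpace Ω] [TopologicalSpace Ω]
    [MeasurableSingletonClass Ω] {ι : Type} [Fintype ι] (w : ι → ℝ) (ω : ι → Ω)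
    (hw0 : ∀ i, 0 ≤ w i) (hw1 : ∑ i, w i = 1) :
    ∃ P : Measure Ω, IsProbabilityMeasure P ∧ ∀ φ : Ω → ℝ, Measurable φ →
      Integrable φ P ∧ ∫ a, φ a ∂P = ∑ i, w i * φ (ω i) := by
  refine ⟨∑ i, ENNReal.ofReal (w i) • Measure.dirac (ω i), ⟨?_⟩, fun φ hφ => ?_⟩
  · rw [Measure.coe_finset_sum, Finset.sum_apply]
    simp only [Measure.smul_apply, smul_eq_mul, measure_univ, mul_one]
    rw [← ENNReal.ofReal_sum_of_nonneg (fun i _ => hw0 i), hw1, ENNReal.ofReal_one]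
  · have hint : ∀ i, Integrable φ (ENNReal.ofReal (w i) • Measure.dirac (ω i)) := by
      intro i
      refine Integrable.smul_measure ?_ ENNReal.ofReal_ne_top
      constructor
      · exact hφ.aestronglyMeasurable
      · rw [HasFiniteIntegral, lintegral_dirac]
        exact ENNReal.coe_lt_top
    constructor
    · exact integrable_finset_sum_measure.2 fun i _ => hint i
    · rw [integral_finset_sum_measure fun i _ => hint i]
      congr 1
      ext i
      rw [integral_smul_measure, integral_dirac, ENNReal.toReal_ofReal (hw0 i), smul_eq_mul]


section MyHelpers

variable {n : ℕ}

private lemma sum_add_mul' (π ρ v : Fin n → ℝ) :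
    (∑ d, (π + ρ) d * v d) = (∑ d, π d * v d) + ∑ d, ρ d * v d := by
  simp [add_mul, Finset.sum_add_distrib]

private lemma sum_sub_mul' (π ρ v : Fin n → ℝ) :
    (∑ d, (π - ρ) d * v d) = (∑ d, π d * v d) - ∑ d, ρ d * v d := by
  simp [sub_mul, Finset.sum_sub_distrib]

private lemma sum_single_mul' (j : Fin (n + 1)) (c : ℝ) (v : Fin (n + 1) → ℝ) :
    (∑ d, (Pi.single j c : Fin (n + 1) → ℝ) d * v d) = c * v j := by
  classical
  rw [Finset.sum_eq_single j]
  · rw [Pi.single_eq_same]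
  · intro d _ hd
    rw [Pi.single_eq_of_ne hd, zero_mul]
  · intro h; exact absurd (Finset.mem_univ j) h

private lemma sum_smul_mul' (c : ℝ) (π v : Fin n → ℝ) :
    (∑ d, (c • π) d * v d) = c * ∑ d, π d * v d := by
  simp [Finset.mul_sum, mul_assoc]

private lemma pi_sum_single_smul' (x : Fin n → ℝ) :
    ∑ d, x d • (Pi.single d 1 : Fin n → ℝ) = x := by
  classical
  conv_rhs => rw [← Finset.univ_sum_single x]
  refine Finset.sum_congr rfl fun d _ => ?_
  rw [← Pi.single_smul, smul_eq_mul, mul_one]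

private lemma clm_pi_apply' (φ : (Fin n → ℝ) →L[ℝ] ℝ) (x : Fin n → ℝ) :
    φ x = ∑ d, x d * φ (Pi.single d 1) := by
  conv_lhs => rw [← pi_sum_single_smul' x]
  rw [map_sum]
  simp only [_root_.map_smul, smul_eq_mul]

private lemma clm_prod_apply' (φ : ((Fin n → ℝ) × ℝ) →L[ℝ] ℝ) (x : Fin n → ℝ) (h : ℝ) :
    φ (x, h) = (∑ d, x d * φ (Pi.single d 1, 0)) + h * φ (0, 1) := by
  classical
  have hxh : (x, h) = (∑ d, x d • ((Pi.single d 1 : Fin n → ℝ), (0 : ℝ)))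
      + h • ((0 : Fin n → ℝ), (1 : ℝ)) := by
    refine Prod.ext ?_ ?_
    · simp [Prod.fst_sum, pi_sum_single_smul' x]
    · simp [Prod.snd_sum]
  rw [hxh, map_add, map_sum]
  simp only [_root_.map_smul, smul_eq_mul]

end MyHelpers

end Aux

open Module Set Filter Topology MeasureTheory in
/-- existence of a cheapest superhedge, whose cost equals the expectation of
the claim under some martingale measure. -/
theorem exists_optimal_superhedge
    [MetricSpace Ω] [Nonempty Ω] [CompactSpace Ω] [TopologicalSpace.SeparableSpace Ω]
    [CompleteSpace Ω] [MeasurableSpace Ω] [BorelSpace Ω] {D : ℕ} (f : Fin (D + 1) → ℝ) (S : Fin (D + 1) → C(Ω, ℝ))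
    (hf : ∀ d, 0 ≤ f d) (hS : ∀ d ω, 0 ≤ S d ω)
    (hS0 : ∀ ω, S 0 ω = 1) (hf0 : f 0 = 1)
    (hNA : ArbitrageFree f S) (H : C(Ω, ℝ)) (hH : ∀ ω, 0 ≤ H ω) :
    ∃ πstar : Fin (D + 1) → ℝ, IsSuperhedge S H πstar ∧
      (∀ π : Fin (D + 1) → ℝ, IsSuperhedge S H π →
        (∑ d, πstar d * f d) ≤ ∑ d, π d * f d) ∧
      ∃ Pstar : Measure Ω, IsMartingaleMeasure f S Pstar ∧
        (∑ d, πstar d * f d) = ∫ ω, H ω ∂Pstar := by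
  classical
  obtain ⟨ω₀⟩ := ‹Nonempty Ω›
  -- the curve of payoffs and its convex hull
  set g : Ω → (Fin (D + 1) → ℝ) × ℝ := fun ω => (fun d => S d ω, H ω) with hg
  have hgc : Continuous g := by
    refine Continuous.prodMk ?_ (map_continuous H)
    exact continuous_pi fun d => map_continuous (S d)
  have hΓc : IsCompact (Set.range g) := isCompact_range hgc
  have hKc : IsCompact (convexHull ℝ (Set.range g)) :=
    myIsCompact_convexHull hΓc (Set.range_nonempty g)
  have hKconv : Convex ℝ (convexHull ℝ (Set.range g)) := convex_convexHull ℝ _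
  have hgK : ∀ ω, g ω ∈ convexHull ℝ (Set.range g) :=
    fun ω => subset_convexHull ℝ _ ⟨ω, rfl⟩
  -- representing measures for points of the hull
  have hrep : ∀ x ∈ convexHull ℝ (Set.range g), ∃ P : Measure Ω,
      IsProbabilityMeasure P ∧ (∀ φ : Ω → ℝ, Measurable φ → Integrable φ P) ∧
      (∀ d, (∫ ω, S d ω ∂P) = x.1 d) ∧ (∫ ω, H ω ∂P) = x.2 := by
    intro x hx
    obtain ⟨ι, hι, z, w, hzs, _, hw0, hw1, hxx⟩ := eq_pos_convex_span_of_mem_convexHull hx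
    letI := hι
    have hzg : ∀ i : ι, ∃ t : Ω, g t = z i := fun i => hzs ⟨i, rfl⟩
    choose ω hω using hzg
    obtain ⟨P, hP, hint⟩ := exists_discrete_measure w ω (fun i => (hw0 i).le) hw1
    have hx1 : ∀ d, x.1 d = ∑ i, w i * S d (ω i) := by
      intro d
      rw [← hxx]
      simp only [Prod.fst_sum, Finset.sum_apply, Prod.smul_fst, Pi.smul_apply, smul_eq_mul]
      refine Finset.sum_congr rfl fun i _ => ?_
      rw [← hω i]
    have hx2 : x.2 = ∑ i, w i * H (ω i) := by
      rw [← hxx]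
      simp only [Prod.snd_sum, Prod.smul_snd, smul_eq_mul]
      refine Finset.sum_congr rfl fun i _ => ?_
      rw [← hω i]
    refine ⟨P, hP, fun φ hφ => (hint φ hφ).1, fun d => ?_, ?_⟩
    · rw [(hint (S d) (map_continuous (S d)).measurable).2, hx1 d]
    · rw [(hint H (map_continuous H).measurable).2, hx2]
  -- Step A : there is a point of the hull above f (a martingale measure exists)
  have hfK : ∃ h₀ : ℝ, ((f, h₀) : (Fin (D + 1) → ℝ) × ℝ) ∈ convexHull ℝ (Set.range g) := by
    by_contra hcon
    push_neg at hcon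
    have hK₁c : IsCompact (Prod.fst '' convexHull ℝ (Set.range g)) := hKc.image continuous_fst
    have hK₁conv : Convex ℝ (Prod.fst '' convexHull ℝ (Set.range g)) :=
      hKconv.linear_image (LinearMap.fst ℝ _ _)
    have hfnot : f ∉ Prod.fst '' convexHull ℝ (Set.range g) := by
      rintro ⟨p, hp, hfst⟩
      refine hcon p.2 ?_
      rw [show ((f, p.2) : (Fin (D + 1) → ℝ) × ℝ) = p from by rw [← hfst]]
      exact hp
    obtain ⟨φ, u, hu1, hu2⟩ := geometric_hahn_banach_point_closed hK₁conv hK₁c.isClosed hfnot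
    have hωlt : ∀ ω, u < ∑ d, (fun d => φ (Pi.single d 1)) d * S d ω := by
      intro ω
      have h1 := hu2 _ ⟨g ω, hgK ω, rfl⟩
      rw [clm_pi_apply' φ] at h1
      calc u < ∑ d, S d ω * φ (Pi.single d 1) := h1
        _ = _ := by exact Finset.sum_congr rfl fun d _ => mul_comm _ _
    have hflt : (∑ d, (fun d => φ (Pi.single d 1)) d * f d) < u := by
      have h1 := hu1
      rw [clm_pi_apply' φ] at h1
      calc (∑ d, (fun d => φ (Pi.single d 1)) d * f d)
          = ∑ d, f d * φ (Pi.single d 1) := Finset.sum_congr rfl fun d _ => mul_comm _ _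
        _ < u := h1
    apply hNA
    set π : Fin (D + 1) → ℝ := fun d => φ (Pi.single d 1) with hπ
    refine ⟨π + Pi.single 0 (-(∑ d, π d * f d)), ?_, fun ω => ?_, ⟨ω₀, ?_⟩⟩
    · rw [sum_add_mul', sum_single_mul', hf0, mul_one]
      linarith
    · rw [sum_add_mul', sum_single_mul', hS0, mul_one]
      linarith [hflt, hωlt ω]
    · rw [sum_add_mul', sum_single_mul', hS0, mul_one]
      linarith [hflt, hωlt ω₀]
  -- Step B : the maximal martingale value m and a maximizing measure
  set T := {h : ℝ | ((f, h) : (Fin (D + 1) → ℝ) × ℝ) ∈ convexHull ℝ (Set.range g)} with hT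
  have hTne : T.Nonempty := hfK
  have hTcomp : IsCompact T := by
    have hTeq : T = Prod.snd '' (convexHull ℝ (Set.range g) ∩ Prod.fst ⁻¹' {f}) := by
      ext h
      constructor
      · intro hh
        exact ⟨(f, h), ⟨hh, rfl⟩, rfl⟩
      · rintro ⟨p, ⟨hx, hx2⟩, rfl⟩
        simp only [Set.mem_preimage, Set.mem_singleton_iff] at hx2
        show ((f, p.2) : (Fin (D + 1) → ℝ) × ℝ) ∈ convexHull ℝ (Set.range g)
        rw [show ((f, p.2) : (Fin (D + 1) → ℝ) × ℝ) = p from by rw [← hx2]]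
        exact hx
    rw [hTeq]
    exact (hKc.inter_right (isClosed_singleton.preimage continuous_fst)).image continuous_snd
  set m := sSup T with hm
  have hmT : m ∈ T := hTcomp.sSup_mem hTne
  have hmub : ∀ h ∈ T, h ≤ m := fun h hh => le_csSup hTcomp.bddAbove hh
  obtain ⟨Pstar, hPstar, hPint, hPS0, hPH0⟩ := hrep (f, m) hmT
  have hPS : ∀ d, (∫ ω, S d ω ∂Pstar) = f d := hPS0
  have hPH : (∫ ω, H ω ∂Pstar) = m := hPH0
  -- lower bound for the cost of any superhedge
  have hlow : ∀ π, IsSuperhedge S H π → m ≤ ∑ d, π d * f d := by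
    intro π hπ
    have hintS : ∀ d : Fin (D + 1), Integrable (fun ω => π d * S d ω) Pstar :=
      fun d => (hPint (S d) (map_continuous (S d)).measurable).const_mul _
    have h1 : (∑ d, π d * f d) = ∫ ω, ∑ d, π d * S d ω ∂Pstar := by
      rw [integral_finset_sum _ (fun d _ => hintS d)]
      refine Finset.sum_congr rfl fun d _ => ?_
      rw [integral_const_mul, hPS d]
    rw [h1, ← hPH]
    exact integral_mono (hPint H (map_continuous H).measurable)
      (integrable_finset_sum _ fun d _ => hintS d) hπ
  -- Step C : for every ε > 0, a superhedge of cost exactly m + ε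
  have hC : ∀ ε : ℝ, 0 < ε → ∃ π, IsSuperhedge S H π ∧ (∑ d, π d * f d) = m + ε := by
    intro ε hε
    have hpnot : ((f, m + ε) : (Fin (D + 1) → ℝ) × ℝ) ∉ convexHull ℝ (Set.range g) := by
      intro hmem
      have := hmub _ hmem
      linarith
    obtain ⟨φ, u, hu1, hu2⟩ := geometric_hahn_banach_point_closed hKconv hKc.isClosed hpnot
    set π : Fin (D + 1) → ℝ := fun d => φ (Pi.single d 1, 0) with hπdef
    set lam : ℝ := φ (0, 1) with hlam
    set c : ℝ := ∑ d, f d * π d with hc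
    have hu1' : c + (m + ε) * lam < u := by
      have := hu1
      rwa [clm_prod_apply' φ] at this
    have hu2' : u < c + m * lam := by
      have := hu2 _ hmT
      rwa [clm_prod_apply' φ] at this
    have hlamneg : lam < 0 := by
      have h := hu1'.trans hu2'
      have hεlam : ε * lam < 0 := by nlinarith [h]
      by_contra hge
      push_neg at hge
      exact absurd hεlam (not_lt.2 (mul_nonneg hε.le hge))
    set a : ℝ := -lam with ha
    have ha0 : 0 < a := by simp only [ha]; linarith
    have hω : ∀ ω, u < (∑ d, S d ω * π d) + H ω * lam := by
      intro ω
      have := hu2 _ (hgK ω)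
      rwa [clm_prod_apply' φ] at this
    refine ⟨(fun d => π d / a) + Pi.single 0 (m + ε - c / a), fun ω => ?_, ?_⟩
    · rw [sum_add_mul', sum_single_mul', hS0, mul_one]
      have h3 : c + (m + ε) * lam < (∑ d, S d ω * π d) + H ω * lam :=
        hu1'.trans (hω ω)
      have h4 : a * H ω < (∑ d, S d ω * π d) - c + (m + ε) * a := by
        rw [ha]
        nlinarith [h3]
      have hsum : (∑ d, π d / a * S d ω) = (∑ d, S d ω * π d) / a := by
        rw [Finset.sum_div]
        exact Finset.sum_congr rfl fun d _ => by ring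
      rw [hsum]
      have h5 : H ω - (m + ε) ≤ ((∑ d, S d ω * π d) - c) / a := by
        rw [le_div_iff₀ ha0]
        nlinarith
      have h6 : ((∑ d, S d ω * π d) - c) / a
          = (∑ d, S d ω * π d) / a - c / a := by ring
      linarith [h5, h6.symm.le, h6.le]
    · rw [sum_add_mul', sum_single_mul', hf0, mul_one]
      have hsum : (∑ d, π d / a * f d) = c / a := by
        rw [hc, Finset.sum_div]
        exact Finset.sum_congr rfl fun d _ => by ring
      rw [hsum]
      ring
  -- the null subspace N and a complement W
  set N : Submodule ℝ (Fin (D + 1) → ℝ) :=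
    { carrier := {v | (∀ ω, ∑ d, v d * S d ω = 0) ∧ (∑ d, v d * f d = 0)}
      add_mem' := by
        rintro v1 v2 ⟨h1, h1'⟩ ⟨h2, h2'⟩
        constructor
        · intro ω
          rw [sum_add_mul', h1 ω, h2 ω, add_zero]
        · rw [sum_add_mul', h1', h2', add_zero]
      zero_mem' := by
        constructor
        · intro ω
          simp
        · simp
      smul_mem' := by
        rintro cc v ⟨h1, h2⟩
        constructor
        · intro ω
          rw [sum_smul_mul', h1 ω, mul_zero]
        · rw [sum_smul_mul', h2, mul_zero] } with hNdef
  have hNmem : ∀ v : Fin (D + 1) → ℝ,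
      v ∈ N ↔ ((∀ ω, ∑ d, v d * S d ω = 0) ∧ (∑ d, v d * f d = 0)) := fun v => Iff.rfl
  obtain ⟨W, hW⟩ := Submodule.exists_isCompl N
  have hWclosed : IsClosed (W : Set (Fin (D + 1) → ℝ)) := Submodule.closed_of_finiteDimensional W
  -- projecting a superhedge into W keeps it a superhedge of the same cost
  have hproj : ∀ π : Fin (D + 1) → ℝ, IsSuperhedge S H π →
      ∃ π' : Fin (D + 1) → ℝ, π' ∈ W ∧ IsSuperhedge S H π' ∧
        (∑ d, π' d * f d) = ∑ d, π d * f d := by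
    intro π hπ
    have hdecomp := Submodule.projection_add_projection_eq_self hW π
    have hvN := (hNmem ((N.linearProjOfIsCompl W hW π : Fin (D + 1) → ℝ))).1
      (Submodule.coe_mem _)
    have heq : π - ((N.linearProjOfIsCompl W hW π : Fin (D + 1) → ℝ))
        = ((W.linearProjOfIsCompl N hW.symm π : Fin (D + 1) → ℝ)) :=
      (eq_sub_of_add_eq' hdecomp).symm
    refine ⟨π - ((N.linearProjOfIsCompl W hW π : Fin (D + 1) → ℝ)), ?_, fun ω => ?_, ?_⟩
    · rw [heq]
      exact Submodule.coe_mem _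
    · rw [sum_sub_mul', hvN.1 ω, sub_zero]
      exact hπ ω
    · rw [sum_sub_mul', hvN.2, sub_zero]
  -- arbitrage-free consequences
  have L1 : ∀ v : Fin (D + 1) → ℝ, (∀ ω, 0 ≤ ∑ d, v d * S d ω) → (∑ d, v d * f d) ≤ 0 →
      (∀ ω, ∑ d, v d * S d ω = 0) ∧ (∑ d, v d * f d) = 0 := by
    intro v hpv hcv
    have hz : ∀ ω, ∑ d, v d * S d ω = 0 := by
      by_contra hex
      push_neg at hex
      obtain ⟨ω, hω⟩ := hex
      exact hNA ⟨v, hcv, hpv, ω, lt_of_le_of_ne (hpv ω) (Ne.symm hω)⟩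
    refine ⟨hz, ?_⟩
    by_contra hne
    have hlt : (∑ d, v d * f d) < 0 := lt_of_le_of_ne hcv hne
    refine hNA ⟨v + Pi.single 0 (-(∑ d, v d * f d)), ?_, fun ω => ?_, ⟨ω₀, ?_⟩⟩
    · rw [sum_add_mul', sum_single_mul', hf0, mul_one]
      linarith
    · rw [sum_add_mul', sum_single_mul', hS0, mul_one, hz ω]
      linarith
    · rw [sum_add_mul', sum_single_mul', hS0, mul_one, hz ω₀]
      linarith
  -- the feasible compact set B
  set B : Set (Fin (D + 1) → ℝ) := (W : Set (Fin (D + 1) → ℝ)) ∩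
      ({π | IsSuperhedge S H π} ∩ {π | (∑ d, π d * f d) ≤ m + 1}) with hB
  have hBne : B.Nonempty := by
    obtain ⟨π₁, hπ₁, hc₁⟩ := hC 1 one_pos
    obtain ⟨π₁', hW₁, hsh₁, hcost₁⟩ := hproj π₁ hπ₁
    refine ⟨π₁', hW₁, hsh₁, ?_⟩
    show (∑ d, π₁' d * f d) ≤ m + 1
    rw [hcost₁, hc₁]
  have hcostcont : Continuous (fun π : Fin (D + 1) → ℝ => ∑ d, π d * f d) :=
    continuous_finset_sum _ fun d _ => (continuous_apply d).mul continuous_const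
  have hpaycont : ∀ ω : Ω, Continuous (fun π : Fin (D + 1) → ℝ => ∑ d, π d * S d ω) :=
    fun ω => continuous_finset_sum _ fun d _ => (continuous_apply d).mul continuous_const
  have hBclosed : IsClosed B := by
    refine hWclosed.inter (IsClosed.inter ?_ ?_)
    · have : {π : Fin (D + 1) → ℝ | IsSuperhedge S H π} =
          ⋂ ω : Ω, {π : Fin (D + 1) → ℝ | H ω ≤ ∑ d, π d * S d ω} := by
        ext π
        simp [IsSuperhedge, Set.mem_iInter]
      rw [this]
      exact isClosed_iInter fun ω => isClosed_le continuous_const (hpaycont ω)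
    · exact isClosed_le hcostcont continuous_const
  have hBbdd : Bornology.IsBounded B := by
    by_contra hb
    rw [isBounded_iff_forall_norm_le] at hb
    push_neg at hb
    choose πn hπn hπnorm using fun k : ℕ => hb k
    have hπpos : ∀ k : ℕ, (0 : ℝ) < ‖πn k‖ :=
      fun k => lt_of_le_of_lt (Nat.cast_nonneg k) (hπnorm k)
    set v : ℕ → Fin (D + 1) → ℝ := fun k => ‖πn k‖⁻¹ • πn k with hvdef
    have hsphere : ∀ k, v k ∈ Metric.sphere (0 : Fin (D + 1) → ℝ) 1 := by
      intro k
      rw [mem_sphere_zero_iff_norm, hvdef]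
      simp only [norm_smul, norm_inv, norm_norm]
      exact inv_mul_cancel₀ (hπpos k).ne'
    obtain ⟨vlim, hvl, ψ, hψ, htend⟩ :=
      (isCompact_sphere (0 : Fin (D + 1) → ℝ) 1).tendsto_subseq hsphere
    have hWv : vlim ∈ W := by
      refine hWclosed.mem_of_tendsto htend (Filter.Eventually.of_forall fun k => ?_)
      exact W.smul_mem _ (hπn (ψ k)).1
    have hpayv : ∀ ω, 0 ≤ ∑ d, vlim d * S d ω := by
      intro ω
      refine ge_of_tendsto (((hpaycont ω).tendsto vlim).comp htend)
        (Filter.Eventually.of_forall fun k => ?_)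
      show 0 ≤ ∑ d, v (ψ k) d * S d ω
      rw [hvdef, sum_smul_mul']
      exact mul_nonneg (inv_nonneg.2 (norm_nonneg _))
        (le_trans (hH ω) ((hπn (ψ k)).2.1 ω))
    have hnormtend : Tendsto (fun k => ‖πn (ψ k)‖) atTop atTop := by
      refine tendsto_atTop_mono (fun k => ?_) tendsto_natCast_atTop_atTop
      calc ((k : ℕ) : ℝ) ≤ ((ψ k : ℕ) : ℝ) := Nat.cast_le.2 (hψ.le_apply)
        _ ≤ ‖πn (ψ k)‖ := (hπnorm (ψ k)).le
    have hcostv : (∑ d, vlim d * f d) ≤ 0 := by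
      have hbnd : Tendsto (fun k => ‖πn (ψ k)‖⁻¹ * (m + 1)) atTop (𝓝 0) := by
        have := hnormtend.inv_tendsto_atTop.mul_const (m + 1)
        rwa [zero_mul] at this
      refine le_of_tendsto_of_tendsto (((hcostcont).tendsto vlim).comp htend) hbnd
        (Filter.Eventually.of_forall fun k => ?_)
      show (∑ d, v (ψ k) d * f d) ≤ ‖πn (ψ k)‖⁻¹ * (m + 1)
      rw [hvdef, sum_smul_mul']
      exact mul_le_mul_of_nonneg_left (hπn (ψ k)).2.2 (inv_nonneg.2 (norm_nonneg _))
    have hvN : vlim ∈ N := (hNmem vlim).2 (L1 vlim hpayv hcostv)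
    have hv0 : vlim = 0 := Submodule.disjoint_def.mp hW.disjoint vlim hvN hWv
    have hn1 : ‖vlim‖ = 1 := by rwa [mem_sphere_zero_iff_norm] at hvl
    rw [hv0, norm_zero] at hn1
    exact zero_ne_one hn1
  have hBcompact : IsCompact B := Metric.isCompact_of_isClosed_isBounded hBclosed hBbdd
  obtain ⟨πstar, hπstarB, hminB⟩ :=
    hBcompact.exists_isMinOn hBne hcostcont.continuousOn
  have hπstarSH : IsSuperhedge S H πstar := hπstarB.2.1
  have hcosthigh : (∑ d, πstar d * f d) ≤ m := by
    refine le_of_forall_pos_le_add fun ε hε => ?_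
    have hε' : 0 < min ε 1 := lt_min hε one_pos
    obtain ⟨πε, hshε, hcε⟩ := hC (min ε 1) hε'
    obtain ⟨πε', hWε, hshε', hcostε'⟩ := hproj πε hshε
    have hmem : πε' ∈ B := ⟨hWε, hshε', by
      show (∑ d, πε' d * f d) ≤ m + 1
      rw [hcostε', hcε]
      have := min_le_right ε 1
      linarith⟩
    have h1 := hminB hmem
    have h2 : (∑ d, πε' d * f d) = m + min ε 1 := by rw [hcostε', hcε]
    have h3 := min_le_left ε 1
    calc (∑ d, πstar d * f d) ≤ ∑ d, πε' d * f d := h1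
      _ = m + min ε 1 := h2
      _ ≤ m + ε := by linarith
  have hcosteq : (∑ d, πstar d * f d) = m :=
    le_antisymm hcosthigh (hlow πstar hπstarSH)
  refine ⟨πstar, hπstarSH, fun π hπ => ?_, Pstar, ⟨hPstar, fun d =>
    ⟨hPint (S d) (map_continuous (S d)).measurable, hPS d⟩⟩, ?_⟩
  · rw [hcosteq]
    exact hlow π hπ
  · rw [hcosteq]
    exact hPH.symm
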